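/- Assume the continuum hypothesis (2^ℵ₀ = ℵ₁). Then property (*) holds: there exists a sequence of functions (φₙ : ω₁ → ω₁)ₙ∈ℕ such that for every subset I of ω₁ of cardinality ℵ₁ there exists n ∈ ℕ with φₙ '' I = ω₁ (i.e., φₙ restricted to I is onto ω₁). -/

import Mathlib

open Cardinal Set

/-- ω₁, the first uncountable ordinal, viewed as the set of all countable ordinals. -/
abbrev Omega1 := {o : Ordinal.{0} // o < (Cardinal.aleph 1).ord}

/-- CH transfers between universes. -/
theorem ch_lift (h : (2 : Cardinal.{u}) ^ Cardinal.aleph0 = Cardinal.aleph 1) :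
    (2 : Cardinal.{v}) ^ Cardinal.aleph0 = Cardinal.aleph 1 := by
  apply Cardinal.lift_injective.{u}
  rw [Cardinal.lift_power, Cardinal.lift_aleph0, Cardinal.lift_two, Cardinal.lift_aleph]
  have := congrArg Cardinal.lift.{v} h
  rw [Cardinal.lift_power, Cardinal.lift_aleph0, Cardinal.lift_two, Cardinal.lift_aleph] at this
  simpa using this

theorem mk_Omega1 : #Omega1 = Cardinal.aleph 1 := by
  have h := Ordinal.mk_Iio_ordinal ((Cardinal.aleph 1).ord : Ordinal.{0})
  rw [Cardinal.card_ord, Cardinal.lift_aleph] at h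
  rw [Ordinal.lift_one] at h
  exact h

/-- CH implies property (*): there is a sequence (φₙ : ω₁ → ω₁) such that every
subset of ω₁ of cardinality ℵ₁ is mapped onto ω₁ by some φₙ. -/
theorem ch_implies_star
    (hCH : (2 : Cardinal) ^ Cardinal.aleph0 = Cardinal.aleph 1) :
    ∃ φ : ℕ → Omega1 → Omega1,
      ∀ I : Set Omega1, #I = Cardinal.aleph 1 →
        ∃ n : ℕ, φ n '' I = Set.univ := by
  classical
  have hCH1 : (2 : Cardinal.{1}) ^ Cardinal.aleph0 = Cardinal.aleph 1 := ch_lift hCH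
  -- an enumeration of all functions ℕ → Omega1 by Omega1
  have harrow : #(ℕ → Omega1) = #Omega1 := by
    rw [Cardinal.mk_arrow, mk_Omega1]
    simp only [Cardinal.lift_aleph0, Cardinal.mk_nat, Cardinal.lift_id, Cardinal.lift_uzero]
    rw [← hCH1, ← Cardinal.power_mul, Cardinal.aleph0_mul_aleph0]
  obtain ⟨e⟩ : Nonempty (Omega1 ≃ (ℕ → Omega1)) := Cardinal.eq.mp harrow.symm
  -- initial segments of Omega1 are countable
  have hseg : ∀ β : Omega1, ({α : Omega1 | α.1 ≤ β.1}).Countable := by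
    intro β
    rw [Cardinal.countable_iff_lt_aleph_one]
    have hsucc : Order.succ β.1 < (Cardinal.aleph 1).ord :=
      (Cardinal.isSuccLimit_ord (Cardinal.aleph0_le_aleph 1)).succ_lt β.2
    have hcard : (Order.succ β.1).card < Cardinal.aleph 1 := Cardinal.lt_ord.mp hsucc
    have hle : #({α : Omega1 | α.1 ≤ β.1}) ≤ #(Set.Iio (Order.succ β.1)) := by
      apply Cardinal.mk_le_of_injective
        (f := fun α => (⟨α.1.1, Order.lt_succ_iff.mpr (α.2 : α.1.1 ≤ β.1)⟩ : Set.Iio (Order.succ β.1)))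
      intro a b hab
      have h1 : a.1.1 = b.1.1 := by simpa using congrArg Subtype.val hab
      exact Subtype.ext (Subtype.ext h1)
    rw [Ordinal.mk_Iio_ordinal] at hle
    exact lt_of_le_of_lt hle (by rwa [Cardinal.lift_lt_aleph_one])
  -- enumerate each initial segment
  have hne : ∀ β : Omega1, ({α : Omega1 | α.1 ≤ β.1}).Nonempty := fun β => ⟨β, show β.1 ≤ β.1 from le_refl _⟩
  choose k hk using fun β => (hseg β).exists_surjective (hne β)
  refine ⟨fun n β => e (k β n).1 n, ?_⟩
  intro I hI
  by_contra h
  push_neg at h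
  have hchoice : ∀ n, ∃ γ : Omega1, γ ∉ (fun β => e (k β n).1 n) '' I := by
    intro n
    by_contra hc
    push_neg at hc
    exact h n (Set.eq_univ_iff_forall.mpr hc)
  choose γ hγ using hchoice
  set α := e.symm γ with hα
  have hsub : I ⊆ {β : Omega1 | β.1 ≤ α.1} := by
    intro β hβ
    by_contra hlt
    have hle : α.1 ≤ β.1 := le_of_lt (not_le.mp hlt)
    obtain ⟨n, hn⟩ := hk β ⟨α, by exact hle⟩
    have hval : (k β n).1 = α := by rw [hn]
    have : e (k β n).1 n = γ n := by
      rw [hval, hα, Equiv.apply_symm_apply]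
    exact hγ n ⟨β, hβ, this⟩
  have hIc : (#I) < Cardinal.aleph 1 := by
    have := (hseg α).mono hsub
    rwa [Cardinal.countable_iff_lt_aleph_one] at this
  exact hIc.ne hI
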